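/- Let n ≥ 3 and define f : ℝ → ℝ by f(x) = |1+x|^{(n+2)/(n−2)} − 1 − ((n+2)/(n−2))·x. Then there exist constants F₄, F₅ ≥ 0 depending only on n, with F₄ = 0 when n ≥ 6, such that |f(x) − f(y)| ≤ |x − y|·(F₄(|x| + |y|) + F₅(|x|^{4/(n−2)} + |y|^{4/(n−2)})) for all x, y ∈ ℝ. -/

import Mathlib

open Real Set Filter Asymptotics

private lemma aux_subadd {q a b : ℝ} (hq0 : 0 ≤ q) (hq1 : q ≤ 1) (ha : 0 ≤ a) (hb : 0 ≤ b) :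
    (a + b) ^ q ≤ a ^ q + b ^ q := by
  have h := NNReal.rpow_add_le_add_rpow a.toNNReal b.toNNReal hq0 hq1
  rw [← Real.toNNReal_add ha hb] at h
  have h2 := NNReal.coe_le_coe.2 h
  rwa [NNReal.coe_add, NNReal.coe_rpow, NNReal.coe_rpow, NNReal.coe_rpow,
    Real.coe_toNNReal _ (by positivity : (0:ℝ) ≤ a + b), Real.coe_toNNReal _ ha,
    Real.coe_toNNReal _ hb] at h2

private lemma aux_mvt_pow {q a b : ℝ} (hq : 1 ≤ q) (hb : 0 ≤ b) (hab : b ≤ a) :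
    a ^ q - b ^ q ≤ q * a ^ (q - 1) * (a - b) := by
  rcases eq_or_lt_of_le (hb.trans hab) with h0 | h0
  · have hb0 : b = 0 := le_antisymm (hab.trans_eq h0.symm) hb
    have hq0 : q ≠ 0 := by linarith
    simp [← h0, hb0, Real.zero_rpow hq0]
  · have ha' : a ≠ 0 := ne_of_gt h0
    have hs : -1 ≤ b / a - 1 := by
      have : 0 ≤ b / a := div_nonneg hb h0.le
      linarith
    have hber := one_add_mul_self_le_rpow_one_add hs hq
    have he : (1 + (b / a - 1)) = b / a := by ring
    rw [he] at hber
    have key : a ^ q * (1 + q * (b / a - 1)) ≤ a ^ q * (b / a) ^ q :=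
      mul_le_mul_of_nonneg_left hber (Real.rpow_nonneg h0.le q)
    have hba : a ^ q * (b / a) ^ q = b ^ q := by
      rw [← Real.mul_rpow h0.le (div_nonneg hb h0.le)]
      congr 1
      field_simp
    rw [hba] at key
    have hq1 : a ^ (q - 1) = a ^ q / a := by
      rw [Real.rpow_sub h0, Real.rpow_one]
    rw [hq1]
    have : q * (a ^ q / a) * (a - b) = a ^ q * (q * (1 - b / a)) := by
      field_simp
    rw [this]
    nlinarith [key]

private lemma aux_B1 {q : ℝ} (hq0 : 0 < q) (hq1 : q ≤ 1) (s : ℝ) :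
    |(|s| ^ q) * Real.sign s - 1| ≤ 2 * |s - 1| ^ q := by
  rcases lt_trichotomy s 0 with hs | hs | hs
  · rw [Real.sign_of_neg hs, abs_of_neg hs]
    have h1 : |s - 1| = 1 + (-s) := by rw [abs_of_nonpos (by linarith)]; ring
    have h2 : (-s) ^ q ≤ (1 + (-s)) ^ q :=
      Real.rpow_le_rpow (by linarith) (by linarith) hq0.le
    have h3 : (1 : ℝ) ≤ (1 + (-s)) ^ q :=
      Real.one_le_rpow (by linarith) hq0.le
    have h4 : |(-s) ^ q * (-1) - 1| = (-s) ^ q + 1 := by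
      rw [abs_of_nonpos (by nlinarith [Real.rpow_nonneg (by linarith : (0:ℝ) ≤ -s) q])]; ring
    rw [h4, h1]; linarith
  · subst hs
    simp only [Real.sign_zero, mul_zero, zero_sub, abs_neg, abs_one]
    rw [Real.one_rpow]; norm_num
  · rw [Real.sign_of_pos hs, mul_one, abs_of_pos hs]
    rcases le_total 1 s with h1 | h1
    · have habs : |s - 1| = s - 1 := abs_of_nonneg (by linarith)
      have hsub : s ^ q ≤ (s - 1) ^ q + 1 ^ q := by
        have := aux_subadd hq0.le hq1 (by linarith : (0:ℝ) ≤ s - 1) zero_le_one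
        simpa using this
      have h1q : (1:ℝ) ≤ s ^ q := Real.one_le_rpow h1 hq0.le
      rw [abs_of_nonneg (by linarith), habs]
      rw [Real.one_rpow] at hsub
      nlinarith [Real.rpow_nonneg (by linarith : (0:ℝ) ≤ s - 1) q]
    · have habs : |s - 1| = 1 - s := by rw [abs_of_nonpos (by linarith)]; ring
      have hsub : (1:ℝ) ^ q ≤ (1 - s) ^ q + s ^ q := by
        have := aux_subadd hq0.le hq1 (by linarith : (0:ℝ) ≤ 1 - s) hs.le
        simpa using this
      have hle : s ^ q ≤ 1 := Real.rpow_le_one hs.le h1 hq0.le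
      rw [abs_of_nonpos (by linarith), habs]
      rw [Real.one_rpow] at hsub
      nlinarith [Real.rpow_nonneg (by linarith : (0:ℝ) ≤ 1 - s) q]

private lemma aux_max_rpow {h r : ℝ} (hh : 0 ≤ h) (hr : 0 ≤ r) :
    (1 + h) ^ r ≤ 2 ^ r * (1 + h ^ r) := by
  rcases le_total h 1 with h1 | h1
  · have : (1 + h) ^ r ≤ (2:ℝ) ^ r := Real.rpow_le_rpow (by linarith) (by linarith) hr
    nlinarith [Real.rpow_nonneg hh r, Real.rpow_pos_of_pos (by norm_num : (0:ℝ) < 2) r]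
  · have h2 : (1 + h) ^ r ≤ (2 * h) ^ r := Real.rpow_le_rpow (by linarith) (by linarith) hr
    have h3 : (2 * h) ^ r = 2 ^ r * h ^ r := Real.mul_rpow (by norm_num) hh
    nlinarith [Real.rpow_pos_of_pos (by norm_num : (0:ℝ) < 2) r, Real.rpow_nonneg hh r]

private lemma aux_B2 {q : ℝ} (hq : 1 ≤ q) (s : ℝ) :
    |(|s| ^ q) * Real.sign s - 1| ≤ q * 2 ^ (q - 1) * (|s - 1| + |s - 1| ^ q) := by
  have hK : (1:ℝ) ≤ q * 2 ^ (q - 1) := by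
    have : (1:ℝ) ≤ 2 ^ (q - 1) := Real.one_le_rpow (by norm_num) (by linarith)
    nlinarith
  rcases lt_trichotomy s 0 with hs | hs | hs
  · rw [Real.sign_of_neg hs, abs_of_neg hs]
    have h1 : |s - 1| = 1 + (-s) := by rw [abs_of_nonpos (by linarith)]; ring
    set h := 1 + (-s) with hh
    have hh1 : (1:ℝ) ≤ h := by simp [hh]; linarith
    have h2 : (-s) ^ q ≤ h ^ q := Real.rpow_le_rpow (by linarith) (by linarith) (by linarith)
    have h4 : |(-s) ^ q * (-1) - 1| = (-s) ^ q + 1 := by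
      rw [abs_of_nonpos (by nlinarith [Real.rpow_nonneg (by linarith : (0:ℝ) ≤ -s) q])]; ring
    rw [h4, h1]
    have h5 : (-s) ^ q + 1 ≤ h ^ q + h := by linarith
    have h6 : h ^ q + h ≤ q * 2 ^ (q - 1) * (h + h ^ q) := by
      nlinarith [Real.rpow_nonneg (by linarith : (0:ℝ) ≤ h) q]
    linarith
  · subst hs
    simp only [Real.sign_zero, mul_zero, zero_sub, abs_neg, abs_one]
    rw [Real.one_rpow]; nlinarith
  · rw [Real.sign_of_pos hs, mul_one, abs_of_pos hs]
    rcases eq_or_ne s 1 with rfl | hs1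
    · simp only [Real.one_rpow, sub_self, abs_zero]
      have h0q : (0:ℝ) ≤ (0:ℝ) ^ q := Real.rpow_nonneg le_rfl q
      nlinarith
    rcases le_total 1 s with h1 | h1
    · have habs : |s - 1| = s - 1 := abs_of_nonneg (by linarith)
      set h := s - 1 with hdef
      have hh0 : 0 ≤ h := by simp [hdef]; linarith
      have hmvt : s ^ q - 1 ^ q ≤ q * s ^ (q - 1) * (s - 1) :=
        aux_mvt_pow hq zero_le_one h1
      rw [Real.one_rpow] at hmvt
      have h1q : (1:ℝ) ≤ s ^ q := Real.one_le_rpow h1 (by linarith)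
      have hsq : s ^ (q - 1) ≤ 2 ^ (q - 1) * (1 + h ^ (q - 1)) := by
        have : s = 1 + h := by simp [hdef]
        rw [this]; exact aux_max_rpow hh0 (by linarith)
      have hhq : h ^ (q - 1) * h = h ^ q := by
        rcases eq_or_lt_of_le hh0 with h0 | h0
        · have hq0 : q ≠ 0 := by linarith
          rw [← h0]
          simp [Real.zero_rpow hq0]
        · have he : h ^ (q - 1) * h ^ (1:ℝ) = h ^ (q - 1 + 1) := (Real.rpow_add h0 _ _).symm
          rw [Real.rpow_one] at he
          rw [he]; norm_num
      rw [abs_of_nonneg (by linarith), habs]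
      calc s ^ q - 1 ≤ q * s ^ (q - 1) * h := hmvt
        _ ≤ q * (2 ^ (q - 1) * (1 + h ^ (q - 1))) * h := by
            apply mul_le_mul_of_nonneg_right _ hh0
            exact mul_le_mul_of_nonneg_left hsq (by linarith)
        _ = q * 2 ^ (q - 1) * (h + h ^ (q - 1) * h) := by ring
        _ = q * 2 ^ (q - 1) * (h + h ^ q) := by rw [hhq]
    · have habs : |s - 1| = 1 - s := by rw [abs_of_nonpos (by linarith)]; ring
      have hmvt : (1:ℝ) ^ q - s ^ q ≤ q * 1 ^ (q - 1) * (1 - s) :=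
        aux_mvt_pow hq hs.le h1
      rw [Real.one_rpow, Real.one_rpow, mul_one] at hmvt
      have hle : s ^ q ≤ 1 := Real.rpow_le_one hs.le h1 (by linarith)
      rw [abs_of_nonpos (by linarith), habs]
      have hr : 0 ≤ (1 - s) ^ q := Real.rpow_nonneg (by linarith) q
      have h2q : (1:ℝ) ≤ 2 ^ (q - 1) := Real.one_le_rpow (by norm_num) (by linarith)
      nlinarith [mul_nonneg (by nlinarith : (0:ℝ) ≤ q * 2 ^ (q - 1) - q)
          (by linarith : (0:ℝ) ≤ 1 - s),
        mul_nonneg (by linarith : (0:ℝ) ≤ q * 2 ^ (q - 1)) hr]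

private lemma aux_deriv {p : ℝ} (hp : 1 < p) (t : ℝ) :
    HasDerivAt (fun x : ℝ => |1 + x| ^ p) (p * |1 + t| ^ (p - 1) * Real.sign (1 + t)) t := by
  rcases lt_trichotomy (1 + t) 0 with h | h | h
  · have hev : ∀ᶠ x in nhds t, |1 + x| = -(1 + x) := by
      have hc : ContinuousAt (fun x : ℝ => 1 + x) t := by fun_prop
      filter_upwards [hc.eventually_lt continuousAt_const h] with x hx
      exact abs_of_neg hx
    have hinner : HasDerivAt (fun x : ℝ => -(1 + x)) (-1) t := by
      exact ((hasDerivAt_id t).const_add 1).neg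
    have hbase : HasDerivAt (fun x : ℝ => (-(1 + x)) ^ p)
        ((-1) * p * (-(1 + t)) ^ (p - 1)) t :=
      hinner.rpow_const (Or.inl (by simpa using ne_of_gt (neg_pos.2 h)))
    have heq : (fun x : ℝ => |1 + x| ^ p) =ᶠ[nhds t] (fun x : ℝ => (-(1 + x)) ^ p) :=
      hev.mono fun x hx => by simp only [hx]
    have := hbase.congr_of_eventuallyEq heq
    refine this.congr_deriv ?_
    rw [Real.sign_of_neg h, abs_of_neg h]; ring
  · have ht : t = -1 := by linarith
    subst ht
    have hzero : p * |1 + (-1:ℝ)| ^ (p - 1) * Real.sign (1 + (-1:ℝ)) = 0 := by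
      norm_num
    rw [hzero]
    rw [hasDerivAt_iff_isLittleO]
    have hval : |1 + (-1:ℝ)| ^ p = 0 := by
      norm_num [Real.zero_rpow (by linarith : p ≠ 0)]
    simp only [hval, smul_zero, sub_zero]
    have ho : (fun x : ℝ => |1 + x| ^ (p - 1)) =o[nhds (-1:ℝ)] (fun _ => (1:ℝ)) := by
      rw [Asymptotics.isLittleO_one_iff]
      have hc : ContinuousAt (fun x : ℝ => |1 + x| ^ (p - 1)) (-1) :=
        ContinuousAt.rpow_const (by fun_prop) (Or.inr (by linarith : (0:ℝ) ≤ p - 1))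
      simpa [Real.zero_rpow (by linarith : p - 1 ≠ 0)] using hc.tendsto
    have hO : (fun x : ℝ => |1 + x|) =O[nhds (-1:ℝ)] (fun x => x - (-1)) := by
      apply Asymptotics.isBigO_of_le
      intro x
      simp only [Real.norm_eq_abs, abs_abs]
      rw [show x - (-1:ℝ) = 1 + x by ring]
    have := ho.mul_isBigO hO
    have heq : (fun x : ℝ => |1 + x| ^ (p - 1) * |1 + x|) = fun x => |1 + x| ^ p := by
      funext x
      rcases eq_or_lt_of_le (abs_nonneg (1 + x)) with h0 | h0
      · rw [← h0, Real.zero_rpow (by linarith : p - 1 ≠ 0),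
          Real.zero_rpow (by linarith : p ≠ 0)]; ring
      · have he := (Real.rpow_add h0 (p - 1) 1).symm
        rw [Real.rpow_one] at he
        rw [he]; norm_num
    rw [heq] at this
    simpa using this
  · have hev : ∀ᶠ x in nhds t, |1 + x| = 1 + x := by
      have hc : ContinuousAt (fun x : ℝ => 1 + x) t := by fun_prop
      filter_upwards [continuousAt_const.eventually_lt hc h] with x hx
      exact abs_of_pos hx
    have hinner : HasDerivAt (fun x : ℝ => 1 + x) 1 t := by
      simpa using (hasDerivAt_id t).const_add 1
    have hbase : HasDerivAt (fun x : ℝ => (1 + x) ^ p) (1 * p * (1 + t) ^ (p - 1)) t :=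
      hinner.rpow_const (Or.inl (ne_of_gt h))
    have heq : (fun x : ℝ => |1 + x| ^ p) =ᶠ[nhds t] (fun x : ℝ => (1 + x) ^ p) :=
      hev.mono fun x hx => by simp only [hx]
    have := hbase.congr_of_eventuallyEq heq
    refine this.congr_deriv ?_
    rw [Real.sign_of_pos h, abs_of_pos h]; ring

private lemma aux_derivf {p : ℝ} (hp : 1 < p) (t : ℝ) :
    HasDerivAt (fun x : ℝ => |1 + x| ^ p - 1 - p * x)
      (p * |1 + t| ^ (p - 1) * Real.sign (1 + t) - p) t := by
  have h1 := aux_deriv hp t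
  have h2 : HasDerivAt (fun x : ℝ => p * x) p t := by
    simpa using (hasDerivAt_id t).const_mul p
  exact (h1.sub_const 1).sub h2

private lemma aux_main {p q C₁ C₂ : ℝ} (hp1 : 1 < p) (_hpq : p - 1 = q)
    (hC₁ : 0 ≤ C₁) (hC₂ : 0 ≤ C₂) (hq0 : 0 < q)
    (hb : ∀ t : ℝ, |p * |1 + t| ^ (p - 1) * Real.sign (1 + t) - p| ≤ C₁ * |t| + C₂ * |t| ^ q) :
    ∀ x y : ℝ, |(|1 + x| ^ p - 1 - p * x) - (|1 + y| ^ p - 1 - p * y)|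
      ≤ |x - y| * (C₁ * (|x| + |y|) + C₂ * (|x| ^ q + |y| ^ q)) := by
  have key : ∀ x y : ℝ, x ≤ y →
      |(|1 + y| ^ p - 1 - p * y) - (|1 + x| ^ p - 1 - p * x)|
      ≤ (C₁ * (|x| + |y|) + C₂ * (|x| ^ q + |y| ^ q)) * (y - x) := by
    intro x y hxy
    set C := C₁ * (|x| + |y|) + C₂ * (|x| ^ q + |y| ^ q) with hC
    have bound : ∀ t ∈ Set.Icc x y,
        ‖p * |1 + t| ^ (p - 1) * Real.sign (1 + t) - p‖ ≤ C := by
      intro t ht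
      have h1 : |t| ≤ |x| + |y| := by
        rw [abs_le]
        constructor
        · have := neg_abs_le x; have := abs_nonneg y; linarith [ht.1]
        · have := le_abs_self y; have := abs_nonneg x; linarith [ht.2]
      have hmax : |t| ≤ max |x| |y| := by
        rw [abs_le]
        constructor
        · have := neg_abs_le x
          have : -(max |x| |y|) ≤ -|x| := by simp [le_max_left]
          linarith [ht.1, neg_abs_le x]
        · exact le_trans (le_trans ht.2 (le_abs_self y)) (le_max_right _ _)
      have h2 : |t| ^ q ≤ |x| ^ q + |y| ^ q := by
        calc |t| ^ q ≤ (max |x| |y|) ^ q :=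
              Real.rpow_le_rpow (abs_nonneg t) hmax hq0.le
          _ ≤ |x| ^ q + |y| ^ q := by
              rcases max_cases |x| |y| with ⟨he, _⟩ | ⟨he, _⟩ <;> rw [he]
              · nlinarith [Real.rpow_nonneg (abs_nonneg y) q]
              · nlinarith [Real.rpow_nonneg (abs_nonneg x) q]
      rw [Real.norm_eq_abs]
      calc |p * |1 + t| ^ (p - 1) * Real.sign (1 + t) - p| ≤ C₁ * |t| + C₂ * |t| ^ q := hb t
        _ ≤ C := add_le_add (mul_le_mul_of_nonneg_left h1 hC₁)
              (mul_le_mul_of_nonneg_left h2 hC₂)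
    have := norm_image_sub_le_of_norm_deriv_le_segment'
      (f := fun x : ℝ => |1 + x| ^ p - 1 - p * x)
      (f' := fun t : ℝ => p * |1 + t| ^ (p - 1) * Real.sign (1 + t) - p)
      (fun t _ => (aux_derivf hp1 t).hasDerivWithinAt)
      (fun t ht => bound t (Set.Ico_subset_Icc_self ht))
      y (Set.right_mem_Icc.2 hxy)
    rw [Real.norm_eq_abs] at this
    linarith [this]
  intro x y
  rcases le_total x y with h | h
  · have := key x y h
    have habs : |x - y| = y - x := by rw [abs_sub_comm]; exact abs_of_nonneg (by linarith)
    rw [abs_sub_comm, habs]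
    linarith [this]
  · have := key y x h
    have habs : |x - y| = x - y := abs_of_nonneg (by linarith)
    rw [habs]
    have hsym : C₁ * (|y| + |x|) + C₂ * (|y| ^ q + |x| ^ q)
        = C₁ * (|x| + |y|) + C₂ * (|x| ^ q + |y| ^ q) := by ring
    rw [hsym] at this
    linarith [this]

theorem stmt_19 (n : ℕ) (hn : 3 ≤ n) :
    ∃ F₄ F₅ : ℝ, 0 ≤ F₄ ∧ 0 ≤ F₅ ∧ (6 ≤ n → F₄ = 0) ∧
      ∀ x y : ℝ,
        |(|1 + x| ^ (((n:ℝ) + 2) / ((n:ℝ) - 2)) - 1 - (((n:ℝ) + 2) / ((n:ℝ) - 2)) * x)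
          - (|1 + y| ^ (((n:ℝ) + 2) / ((n:ℝ) - 2)) - 1 - (((n:ℝ) + 2) / ((n:ℝ) - 2)) * y)|
        ≤ |x - y| * (F₄ * (|x| + |y|)
            + F₅ * (|x| ^ ((4:ℝ) / ((n:ℝ) - 2)) + |y| ^ ((4:ℝ) / ((n:ℝ) - 2)))) := by
  have hn3 : (3:ℝ) ≤ (n:ℝ) := by exact_mod_cast hn
  have hne : (0:ℝ) < (n:ℝ) - 2 := by linarith
  set p : ℝ := ((n:ℝ) + 2) / ((n:ℝ) - 2) with hpdef
  set q : ℝ := (4:ℝ) / ((n:ℝ) - 2) with hqdef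
  have hpq : p - 1 = q := by
    rw [hpdef, hqdef]
    field_simp
    ring
  have hq0 : 0 < q := by positivity
  have hp1 : 1 < p := by linarith
  have hp0 : 0 < p := by linarith
  by_cases h6 : 6 ≤ n
  · -- q ≤ 1
    have h6' : (6:ℝ) ≤ (n:ℝ) := by exact_mod_cast h6
    have hq1 : q ≤ 1 := by
      rw [hqdef, div_le_one hne]; linarith
    refine ⟨0, 2 * p, le_refl 0, by positivity, fun _ => rfl, ?_⟩
    apply aux_main hp1 hpq (le_refl 0) (by positivity) hq0
    intro t
    have hB := aux_B1 hq0 hq1 (1 + t)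
    have hsimp : (1 + t) - 1 = t := by ring
    rw [hsimp] at hB
    have hfact : p * |1 + t| ^ (p - 1) * Real.sign (1 + t) - p
        = p * ((|1 + t| ^ (p - 1)) * Real.sign (1 + t) - 1) := by ring
    rw [hfact, abs_mul, abs_of_pos hp0, hpq]
    calc p * |(|1 + t| ^ q) * Real.sign (1 + t) - 1| ≤ p * (2 * |t| ^ q) :=
          mul_le_mul_of_nonneg_left hB hp0.le
      _ = 0 * |t| + 2 * p * |t| ^ q := by ring
  · have h5 : n ≤ 5 := by omega
    have hq1 : 1 ≤ q := by
      rw [hqdef, le_div_iff₀ hne]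
      have : (n:ℝ) ≤ 5 := by exact_mod_cast h5
      linarith
    set K : ℝ := p * (q * 2 ^ (q - 1)) with hK
    have hKpos : 0 ≤ K := by positivity
    refine ⟨K, K, hKpos, hKpos, fun h => absurd h h6, ?_⟩
    apply aux_main hp1 hpq hKpos hKpos hq0
    intro t
    have hB := aux_B2 hq1 (1 + t)
    have hsimp : (1 + t) - 1 = t := by ring
    rw [hsimp] at hB
    have hfact : p * |1 + t| ^ (p - 1) * Real.sign (1 + t) - p
        = p * ((|1 + t| ^ (p - 1)) * Real.sign (1 + t) - 1) := by ring
    rw [hfact, abs_mul, abs_of_pos hp0, hpq]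
    calc p * |(|1 + t| ^ q) * Real.sign (1 + t) - 1|
        ≤ p * (q * 2 ^ (q - 1) * (|t| + |t| ^ q)) := mul_le_mul_of_nonneg_left hB hp0.le
      _ = K * |t| + K * |t| ^ q := by rw [hK]; ring
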